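/- Let Y(x) := (S_T(x) − K)⁺, C := e^{-rT}·∫_ℝ Y(x) dγ(x) and A := ∫_ℝ e^{−Y(x)} dγ(x). Then v := (1/2)·(C − e^{-rT}·ln A) is the unique real number satisfying exp(e^{rT}(C − v)) − 1 = ∫_ℝ (exp(v·e^{rT} − Y(x)) − 1) dγ(x). (Explicit equal-risk price of a European call option under a short selling ban with risk function e^x − 1.) -/
import Mathlib


open MeasureTheory ProbabilityTheory

/-- Explicit equal-risk price of a European call option under a short selling ban
with risk function `R₂(x) = e^x - 1`. -/
theorem equal_risk_call_price_R2
    (S K σ T r : ℝ) (hS : 0 < S) (hK : 0 < K) (hσ : 0 < σ) (hT : 0 < T)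
    (ST : ℝ → ℝ)
    (hST : ∀ x, ST x = S * Real.exp ((r - σ ^ 2 / 2) * T + σ * Real.sqrt T * x))
    (Y : ℝ → ℝ) (hY : ∀ x, Y x = max (ST x - K) 0)
    (C : ℝ) (hC : C = Real.exp (-r * T) * ∫ x, Y x ∂(gaussianReal 0 1))
    (A : ℝ) (hA : A = ∫ x, Real.exp (-(Y x)) ∂(gaussianReal 0 1))
    (v : ℝ) (hv : v = (1 / 2) * (C - Real.exp (-r * T) * Real.log A)) :
    (Real.exp (Real.exp (r * T) * (C - v)) - 1
        = ∫ x, (Real.exp (v * Real.exp (r * T) - Y x) - 1) ∂(gaussianReal 0 1))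
    ∧ ∀ w : ℝ,
        (Real.exp (Real.exp (r * T) * (C - w)) - 1
          = ∫ x, (Real.exp (w * Real.exp (r * T) - Y x) - 1) ∂(gaussianReal 0 1))
        → w = v := by
  set μ := gaussianReal 0 1 with hμ
  have hE : (0:ℝ) < Real.exp (r * T) := Real.exp_pos _
  have hYcont : Continuous Y := by
    have h : Y = fun x => max (S * Real.exp ((r - σ ^ 2 / 2) * T + σ * Real.sqrt T * x) - K) 0 := by
      funext x; rw [hY, hST]
    rw [h]; continuity
  have hfcont : Continuous (fun x => Real.exp (-(Y x))) := by continuity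
  have hint : Integrable (fun x => Real.exp (-(Y x))) μ := by
    apply Integrable.mono' (integrable_const (1:ℝ)) hfcont.aestronglyMeasurable
    filter_upwards with x
    rw [Real.norm_eq_abs, abs_of_pos (Real.exp_pos _)]
    apply Real.exp_le_one_iff.mpr
    simp [hY]
  have hApos : 0 < A := by
    rw [hA]
    rw [integral_pos_iff_support_of_nonneg (fun x => (Real.exp_pos _).le) hint]
    have hs : Function.support (fun x => Real.exp (-(Y x))) = Set.univ := by
      ext x; simp [Function.support, Real.exp_ne_zero]
    rw [hs]
    simp
  have key : ∀ c : ℝ, (∫ x, (Real.exp (c - Y x) - 1) ∂μ) = Real.exp c * A - 1 := by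
    intro c
    have heq : (fun x => Real.exp (c - Y x)) = fun x => Real.exp c * Real.exp (-(Y x)) := by
      funext x; rw [← Real.exp_add, sub_eq_add_neg]
    have h1 : Integrable (fun x => Real.exp (c - Y x)) μ := by
      rw [heq]; exact hint.const_mul _
    rw [integral_sub h1 (integrable_const 1), integral_const]
    have h2 : (∫ x, Real.exp (c - Y x) ∂μ) = Real.exp c * A := by
      rw [heq, integral_const_mul, hA]
    rw [h2]
    simp
  have hexp : Real.exp (-r * T) = (Real.exp (r * T))⁻¹ := by
    rw [← Real.exp_neg]; ring_nf
  have crit : ∀ w : ℝ,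
      (Real.exp (Real.exp (r * T) * (C - w)) - 1
        = ∫ x, (Real.exp (w * Real.exp (r * T) - Y x) - 1) ∂μ)
      ↔ Real.exp (r * T) * (C - w) = w * Real.exp (r * T) + Real.log A := by
    intro w
    rw [key (w * Real.exp (r * T))]
    constructor
    · intro h
      have h' : Real.exp (Real.exp (r * T) * (C - w))
          = Real.exp (w * Real.exp (r * T)) * A := by linarith
      have : Real.exp (Real.exp (r * T) * (C - w))
          = Real.exp (w * Real.exp (r * T) + Real.log A) := by
        rw [Real.exp_add, Real.exp_log hApos]; exact h'
      exact Real.exp_injective this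
    · intro h
      rw [h, Real.exp_add, Real.exp_log hApos]
  constructor
  · rw [hμ] at crit ⊢
    rw [crit v]
    rw [hv, hexp]
    field_simp
    ring
  · intro w hw
    rw [hμ] at crit
    have h := (crit w).mp hw
    rw [hv, hexp]
    have hEne : Real.exp (r * T) ≠ 0 := hE.ne'
    field_simp at h ⊢
    nlinarith [h]
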